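/- Let f : (0,∞) → (0,∞) be continuous with Φ(x) = ∫₁^x ds/f(s) satisfying Φ(0⁺) = −∞ and Φ(+∞) = +∞. Let x : [0,β) → (0,∞) be a C¹ solution of ẋ(t) = −f(x(t)) + u(t) with u(t) ≥ 0 for all t. Then for all t ∈ [0,β): x(t) ≥ Φ⁻¹(Φ(x(0)) − t) > 0. -/

import Mathlib

open Filter

/-- Positivity of solutions: with nonnegative input, the solution of ẋ = −f(x)+u
stays above Φ⁻¹(Φ(x(0)) − t) > 0. -/
theorem solution_positivity
    (f : ℝ → ℝ) (hfc : ContinuousOn f (Set.Ioi 0))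
    (hfpos : ∀ x : ℝ, 0 < x → 0 < f x)
    (Φ Ψ : ℝ → ℝ) (hΦ : ∀ x : ℝ, 0 < x → Φ x = ∫ s in (1:ℝ)..x, 1 / f s)
    -- Ψ is the inverse Φ⁻¹ : ℝ → (0,∞) of the strictly increasing bijection Φ
    (hΨpos : ∀ y : ℝ, 0 < Ψ y) (hΨΦ : ∀ x : ℝ, 0 < x → Ψ (Φ x) = x)
    (hΦΨ : ∀ y : ℝ, Φ (Ψ y) = y)
    (β : ℝ) (hβ : 0 < β)
    (x u : ℝ → ℝ)
    (hxpos : ∀ t ∈ Set.Ico (0:ℝ) β, 0 < x t)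
    (hu : ∀ t ∈ Set.Ico (0:ℝ) β, 0 ≤ u t)
    (hsol : ∀ t ∈ Set.Ico (0:ℝ) β, HasDerivAt x (-(f (x t)) + u t) t) :
    ∀ t ∈ Set.Ico (0:ℝ) β, x t ≥ Ψ (Φ (x 0) - t) ∧ 0 < Ψ (Φ (x 0) - t) := by
  have hgc : ContinuousOn (fun s => 1 / f s) (Set.Ioi 0) :=
    continuousOn_const.div hfc (fun z hz => (hfpos z hz).ne')
  have hint : ∀ a b : ℝ, 0 < a → 0 < b →
      IntervalIntegrable (fun s => 1 / f s) MeasureTheory.volume a b := by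
    intro a b ha hb
    apply ContinuousOn.intervalIntegrable
    apply hgc.mono
    intro z hz
    exact lt_of_lt_of_le (lt_min ha hb) hz.1
  -- Φ is strictly monotone on (0,∞)
  have hmono : StrictMonoOn Φ (Set.Ioi 0) := by
    intro a ha b hb hab
    have h1 : Φ b - Φ a = ∫ s in a..b, 1 / f s := by
      rw [hΦ a ha, hΦ b hb]
      exact intervalIntegral.integral_interval_sub_left (hint 1 b one_pos hb)
        (hint 1 a one_pos ha)
    have h2 : 0 < ∫ s in a..b, 1 / f s := by
      apply intervalIntegral.intervalIntegral_pos_of_pos_on (hint a b ha hb)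
        _ hab
      intro z hz
      exact one_div_pos.mpr (hfpos z (lt_trans ha hz.1))
    linarith
  -- derivative of Φ at positive points
  have hΦderiv : ∀ y : ℝ, 0 < y → HasDerivAt Φ (1 / f y) y := by
    intro y hy
    have h1 : HasDerivAt (fun z => ∫ s in (1:ℝ)..z, 1 / f s) (1 / f y) y :=
      intervalIntegral.integral_hasDerivAt_right (hint 1 y one_pos hy)
        (hgc.stronglyMeasurableAtFilter isOpen_Ioi y hy)
        ((hgc y hy).continuousAt (Ioi_mem_nhds hy))
    apply h1.congr_of_eventuallyEq
    filter_upwards [isOpen_Ioi.mem_nhds (show y ∈ Set.Ioi (0:ℝ) from hy)] with z hz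
    exact hΦ z hz
  -- the function φ t = Φ (x t) + t has nonneg derivative on [0,β)
  have hd : ∀ t ∈ Set.Ico (0:ℝ) β,
      HasDerivAt (fun s => Φ (x s) + s) (1 / f (x t) * (-(f (x t)) + u t) + 1) t := by
    intro t ht
    exact (((hΦderiv (x t) (hxpos t ht)).comp t (hsol t ht)).add (hasDerivAt_id t))
  have hdnonneg : ∀ t ∈ Set.Ico (0:ℝ) β,
      0 ≤ 1 / f (x t) * (-(f (x t)) + u t) + 1 := by
    intro t ht
    have hf := hfpos (x t) (hxpos t ht)
    have hut := hu t ht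
    have : 1 / f (x t) * (-(f (x t)) + u t) + 1 = u t / f (x t) := by
      field_simp
      ring
    rw [this]
    positivity
  have hφmono : MonotoneOn (fun s => Φ (x s) + s) (Set.Ico 0 β) := by
    apply monotoneOn_of_deriv_nonneg (convex_Ico 0 β)
    · intro t ht
      exact ((hd t ht).continuousAt).continuousWithinAt
    · intro t ht
      rw [interior_Ico] at ht
      exact ((hd t ⟨le_of_lt ht.1, ht.2⟩).differentiableAt).differentiableWithinAt
    · intro t ht
      rw [interior_Ico] at ht
      have ht' : t ∈ Set.Ico (0:ℝ) β := ⟨le_of_lt ht.1, ht.2⟩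
      rw [(hd t ht').deriv]
      exact hdnonneg t ht'
  intro t ht
  have h0 : (0:ℝ) ∈ Set.Ico (0:ℝ) β := ⟨le_refl 0, hβ⟩
  have hle : Φ (x 0) + 0 ≤ Φ (x t) + t := hφmono h0 ht ht.1
  have hkey : Φ (x 0) - t ≤ Φ (x t) := by linarith
  refine ⟨?_, hΨpos _⟩
  by_contra hlt
  push_neg at hlt
  have := hmono (Set.mem_Ioi.mpr (hxpos t ht)) (Set.mem_Ioi.mpr (hΨpos (Φ (x 0) - t))) hlt
  rw [hΦΨ] at this
  linarith
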